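/- Every pack-good congruence on (ℕ⁺)* is a park-good congruence: if a monoid congruence ≡ is a pack-congruence and is compatible with restriction to alphabet intervals, then ≡ is also a park-congruence (and remains compatible with restriction to alphabet intervals). -/

import Mathlib

open scoped Classical

/-- Words over the positive integers. -/
abbrev Word : Type := List ℕ+

/-- Evaluation of a word: number of occurrences of each letter. -/
def ev (w : Word) : ℕ+ → ℕ := fun a => w.count a

/-- A monoid congruence on the free monoid `(ℕ⁺)*`. -/
def IsCongruence (r : Word → Word → Prop) : Prop :=
  Equivalence r ∧ ∀ u v u' v', r u v → r u' v' → r (u ++ u') (v ++ v')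

/-- Restriction of a word to the letters belonging to a set `I`. -/
noncomputable def restrictTo (I : Set ℕ+) (w : Word) : Word :=
  w.filter fun a => decide (a ∈ I)

/-- `I` is an interval (order-convex subset) of `ℕ⁺`. -/
def IsIntervalSet (I : Set ℕ+) : Prop :=
  ∀ ⦃a b c : ℕ+⦄, a ∈ I → c ∈ I → a ≤ b → b ≤ c → b ∈ I

/-- Compatibility with restriction to alphabet intervals. -/
def CompatRestrict (r : Word → Word → Prop) : Prop :=
  ∀ I : Set ℕ+, IsIntervalSet I → ∀ u v, r u v → r (restrictTo I u) (restrictTo I v)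

/-- `r` is a `φ`-congruence. -/
def IsPhiCongruence (φ : Word → Word) (r : Word → Word → Prop) : Prop :=
  ∀ u v, r u v ↔ (r (φ u) (φ v) ∧ ev u = ev v)

/-- Standardization. -/
def std (w : Word) : Word :=
  (List.range w.length).map fun i =>
    ⟨((List.range w.length).countP fun j =>
        decide (w.getD j 1 < w.getD i 1 ∨ (w.getD j 1 = w.getD i 1 ∧ j < i))) + 1,
      Nat.succ_pos _⟩

/-- Packing. -/
def pack (w : Word) : Word :=
  w.map fun a => ⟨(w.dedup.countP fun b => decide (b < a)) + 1, Nat.succ_pos _⟩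

theorem parkBad_ex (w : Word) :
    ∃ d : ℕ, 1 ≤ d ∧ (w.countP fun a : ℕ+ => decide ((a : ℕ) ≤ d)) < d :=
  ⟨w.length + 1, Nat.succ_le_succ (Nat.zero_le _), by
    have h : (w.countP fun a : ℕ+ => decide ((a : ℕ) ≤ w.length + 1)) ≤ w.length :=
      List.countP_le_length
    omega⟩

/-- The smallest `d ≥ 1` such that fewer than `d` letters of `w` are `≤ d`. -/
noncomputable def parkBad (w : Word) : ℕ := Nat.find (parkBad_ex w)

/-- One pass of the parkization procedure, with fuel. -/
noncomputable def parkAux : ℕ → Word → Word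
  | 0, w => w
  | f + 1, w =>
    if parkBad w ≤ w.length then
      parkAux f (w.map fun a : ℕ+ => if parkBad w < (a : ℕ) then (a - 1 : ℕ+) else a)
    else w

/-- Parkization. The fuel `(sum of the letters)` always suffices,
since every pass strictly decreases the sum of the letters. -/
noncomputable def park (w : Word) : Word := parkAux (w.map fun a => (a : ℕ)).sum w

/-- Smallest monoid congruence containing `base`. -/
def CongClosure (base : Word → Word → Prop) (u v : Word) : Prop :=
  ∀ r : Word → Word → Prop, IsCongruence r → (∀ x y, base x y → r x y) → r u v

def sylvBase (x y : Word) : Prop :=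
  ∃ (a b c : ℕ+) (v : Word), a ≤ b ∧ b < c ∧
    x = a :: c :: (v ++ [b]) ∧ y = c :: a :: (v ++ [b])

/-- The sylvester congruence. -/
def sylv : Word → Word → Prop := CongClosure sylvBase

def stalBase (x y : Word) : Prop :=
  ∃ (a b : ℕ+) (v : Word), x = b :: a :: (v ++ [b]) ∧ y = a :: b :: (v ++ [b])

/-- The stalactic congruence. -/
def stal : Word → Word → Prop := CongClosure stalBase

def sylvSharpBase (x y : Word) : Prop :=
  ∃ (a b c : ℕ+) (v : Word), a < b ∧ b ≤ c ∧
    x = b :: (v ++ [a, c]) ∧ y = b :: (v ++ [c, a])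

/-- The #-sylvester congruence. -/
def sylvSharp : Word → Word → Prop := CongClosure sylvSharpBase

/-- The taïga congruence: join of the sylvester and stalactic congruences. -/
def taiga : Word → Word → Prop := CongClosure fun u v => sylv u v ∨ stal u v

/-- Planar binary trees with letter labels. -/
inductive BT : Type where
  | leaf : BT
  | node : BT → ℕ+ → BT → BT
deriving DecidableEq

/-- Binary search tree insertion of a letter. -/
def BT.insert : BT → ℕ+ → BT
  | .leaf, l => .node .leaf l .leaf
  | .node L b R, l => if l ≤ b then .node (L.insert l) b R else .node L b (R.insert l)

/-- Binary search tree of a word: insert the letters from right to left. -/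
def bst (w : Word) : BT := w.foldr (fun l t => t.insert l) .leaf

/-- Planar binary trees labelled by a letter and a multiplicity. -/
inductive BSTM : Type where
  | leaf : BSTM
  | node : BSTM → ℕ+ → ℕ+ → BSTM → BSTM   -- left, letter, multiplicity, right
deriving DecidableEq

/-- Insertion of a letter into a binary search tree with multiplicities. -/
def BSTM.insert : BSTM → ℕ+ → BSTM
  | .leaf, l => .node .leaf l 1 .leaf
  | .node L l' k R, l =>
    if l = l' then .node L l' (k + 1) R
    else if l < l' then .node (L.insert l) l' k R
    else .node L l' k (R.insert l)

/-- The `P`-symbol: insert the letters of `w` from right to left. -/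
def Pmap (w : Word) : BSTM := w.foldr (fun l t => t.insert l) .leaf

/-- Letters of a BSTM in left-to-right (infix) order. -/
def BSTM.letters : BSTM → List ℕ+
  | .leaf => []
  | .node L l _ R => L.letters ++ l :: R.letters

/-- The binary search tree property for a BSTM. -/
def BSTM.IsSearchTree : BSTM → Prop
  | .leaf => True
  | .node L l _ R =>
      (∀ x ∈ L.letters, x < l) ∧ (∀ x ∈ R.letters, l < x) ∧
        L.IsSearchTree ∧ R.IsSearchTree

/-- Total multiplicity of a letter in a BSTM. -/
def BSTM.mult : BSTM → ℕ+ → ℕ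
  | .leaf, _ => 0
  | .node L l k R, a => L.mult a + (if a = l then (k : ℕ) else 0) + R.mult a

/-- Size of a BSTM: sum of the multiplicities. -/
def BSTM.size : BSTM → ℕ
  | .leaf => 0
  | .node L _ k R => L.size + (k : ℕ) + R.size

/-- Planar binary trees with multiplicities. -/
inductive BTM : Type where
  | leaf : BTM
  | node : BTM → ℕ+ → BTM → BTM
deriving DecidableEq

/-- Size of a BTM: sum of the multiplicities. -/
def BTM.size : BTM → ℕ
  | .leaf => 0
  | .node L k R => L.size + (k : ℕ) + R.size

/-- Number of nodes of a BTM. -/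
def BTM.numNodes : BTM → ℕ
  | .leaf => 0
  | .node L _ R => L.numNodes + 1 + R.numNodes

/-- Forgetting the letters of a BSTM gives a BTM. -/
def forgetLetters : BSTM → BTM
  | .leaf => .leaf
  | .node L _ k R => .node (forgetLetters L) k (forgetLetters R)

/-- The `B`-symbol: the BTM underlying `P(w)`. -/
def Bmap (w : Word) : BTM := forgetLetters (Pmap w)

/-- A packed word: its set of letters is `{1, …, k}` for some `k`. -/
def IsPacked (w : Word) : Prop := ∀ a ∈ w, ∀ b : ℕ+, b ≤ a → b ∈ w

/-- Number of packed words inserting to the BTM `T`. -/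
noncomputable def fT (T : BTM) : ℕ :=
  Set.ncard {w : Word | IsPacked w ∧ Bmap w = T}

/-- The hook-type product over the subtrees of a BTM. -/
def hookProd : BTM → ℕ
  | .leaf => 1
  | .node L k R =>
      (BTM.node L k R).size * ((k : ℕ) - 1).factorial * hookProd L * hookProd R

/-- Label the nodes of a BTM in infix order starting from a given letter;
returns the labelled tree and the next unused letter. -/
def infixLabelAux : BTM → ℕ+ → BSTM × ℕ+
  | .leaf, n => (.leaf, n)
  | .node L k R, n =>
    let p := infixLabelAux L n
    let q := infixLabelAux R (p.2 + 1)
    (.node p.1 p.2 k q.1, q.2)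

/-- Label the nodes of a BTM by `1, …, k` in infix order. -/
def infixLabel (T : BTM) : BSTM := (infixLabelAux T 1).1

section AuxPark

private lemma my_countP_succ (l : Word) (e : ℕ) :
    (l.countP fun a : ℕ+ => decide ((a:ℕ) ≤ e + 1)) =
    (l.countP fun a : ℕ+ => decide ((a:ℕ) ≤ e)) +
    (l.countP fun a : ℕ+ => decide ((a:ℕ) = e + 1)) := by
  induction l with
  | nil => simp
  | cons a l ih =>
    simp only [List.countP_cons, ih]
    split_ifs <;> simp_all <;> omega

private lemma letter_ne_parkBad {w : Word} {a : ℕ+} (ha : a ∈ w) : (a:ℕ) ≠ parkBad w := by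
  intro had
  have hfind : Nat.find (parkBad_ex w) = parkBad w := rfl
  obtain ⟨h1, h2⟩ := Nat.find_spec (parkBad_ex w)
  rw [hfind] at h1 h2
  obtain ⟨e, he⟩ : ∃ e, parkBad w = e + 1 :=
    ⟨parkBad w - 1, by omega⟩
  have hpos : 0 < w.countP fun b : ℕ+ => decide ((b:ℕ) = e + 1) := by
    rw [List.countP_pos_iff]
    exact ⟨a, ha, by simp [had, he]⟩
  have hge : e ≤ w.countP fun b : ℕ+ => decide ((b:ℕ) ≤ e) := by
    rcases Nat.eq_zero_or_pos e with rfl | hepos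
    · exact Nat.zero_le _
    · have hmin := Nat.find_min (parkBad_ex w) (show e < Nat.find (parkBad_ex w) by rw [hfind]; omega)
      push_neg at hmin
      exact hmin hepos
  have hsplit := my_countP_succ w e
  rw [he] at h2
  omega

private lemma my_coe_step (d : ℕ) (hd : 1 ≤ d) (a : ℕ+) :
    (((if d < (a:ℕ) then (a-1:ℕ+) else a) : ℕ+) : ℕ) =
      if d < (a:ℕ) then (a:ℕ) - 1 else (a:ℕ) := by
  split_ifs with h
  · have h1a : (1:ℕ+) < a := by rw [← PNat.coe_lt_coe, PNat.one_coe]; omega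
    rw [PNat.sub_coe, if_pos h1a, PNat.one_coe]
  · rfl

private lemma step_strict (w : Word) :
    ∀ a ∈ w, ∀ b ∈ w,
      (a < b ↔ (if parkBad w < (a:ℕ) then (a-1:ℕ+) else a) <
               (if parkBad w < (b:ℕ) then (b-1:ℕ+) else b)) := by
  intro a ha b hb
  have hda := letter_ne_parkBad ha
  have hdb := letter_ne_parkBad hb
  have h1 : 1 ≤ parkBad w := (Nat.find_spec (parkBad_ex w)).1
  rw [← PNat.coe_lt_coe, ← PNat.coe_lt_coe, my_coe_step _ h1, my_coe_step _ h1]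
  have hna : 1 ≤ (a:ℕ) := a.one_le
  have hnb : 1 ≤ (b:ℕ) := b.one_le
  split_ifs <;> omega

private lemma my_toFinset_map (w : Word) (f : ℕ+ → ℕ+) :
    (w.map f).toFinset = w.toFinset.image f := by
  ext x; simp

private lemma dedup_countP_eq (l : Word) (a : ℕ+) :
    (l.dedup.countP fun b => decide (b < a)) = (l.toFinset.filter (· < a)).card := by
  rw [List.countP_eq_length_filter,
    ← List.toFinset_card_of_nodup ((l.nodup_dedup).filter _)]
  congr 1
  ext x
  simp only [List.mem_toFinset, List.mem_filter, List.mem_dedup, Finset.mem_filter,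
    decide_eq_true_eq]

private lemma pack_map (w : Word) (f : ℕ+ → ℕ+)
    (hf : ∀ a ∈ w, ∀ b ∈ w, (a < b ↔ f a < f b)) :
    pack (w.map f) = pack w := by
  have hinj : ∀ a ∈ w, ∀ b ∈ w, f a = f b → a = b := by
    intro a ha b hb hfab
    rcases lt_trichotomy a b with h | h | h
    · exact absurd ((hf a ha b hb).mp h) (by rw [hfab]; exact lt_irrefl _)
    · exact h
    · exact absurd ((hf b hb a ha).mp h) (by rw [hfab]; exact lt_irrefl _)
  unfold pack
  refine List.map_map.trans ?_
  apply List.map_congr_left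
  intro a ha
  apply Subtype.ext
  show ((w.map f).dedup.countP fun b => decide (b < f a)) + 1 =
       (w.dedup.countP fun b => decide (b < a)) + 1
  congr 1
  rw [dedup_countP_eq, dedup_countP_eq, my_toFinset_map, Finset.filter_image,
    Finset.card_image_of_injOn]
  · congr 1
    apply Finset.filter_congr
    intro x hx
    rw [List.mem_toFinset] at hx
    first
      | exact (hf x hx a ha).symm
      | exact propext (hf x hx a ha).symm
  · intro x hx y hy hxy
    simp only [Finset.coe_filter, Set.mem_setOf_eq, List.mem_toFinset] at hx hy
    exact hinj x hx.1 y hy.1 hxy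

private lemma pack_parkAux : ∀ (f : ℕ) (w : Word), pack (parkAux f w) = pack w
  | 0, _ => rfl
  | f + 1, w => by
    rw [parkAux]
    split_ifs with h
    · rw [pack_parkAux f _]
      exact pack_map w _ (step_strict w)
    · rfl

private lemma pack_park (w : Word) : pack (park w) = pack w := pack_parkAux _ w

private lemma parkBad_perm {u v : Word} (h : u.Perm v) : parkBad u = parkBad v := by
  have hcount : ∀ p : ℕ+ → Bool, u.countP p = v.countP p := fun p => h.countP_eq p
  have specv := Nat.find_spec (parkBad_ex v)
  have specu := Nat.find_spec (parkBad_ex u)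
  exact le_antisymm (Nat.find_le ⟨specv.1, by rw [hcount]; exact specv.2⟩)
    (Nat.find_le ⟨specu.1, by rw [← hcount]; exact specu.2⟩)

private lemma parkAux_perm : ∀ (f : ℕ) {u v : Word}, u.Perm v →
    (parkAux f u).Perm (parkAux f v)
  | 0, _, _, h => h
  | f + 1, u, v, h => by
    rw [parkAux, parkAux, parkBad_perm h, h.length_eq]
    split_ifs with hc
    · exact parkAux_perm f (h.map _)
    · exact h

private lemma park_def (w : Word) :
    park w = parkAux ((w.map fun a : ℕ+ => (a:ℕ)).sum) w := by
  unfold park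
  congr 2
  simp only [List.map_id', List.bind_eq_flatMap, List.pure_def]
  exact (List.map_eq_flatMap).symm

private lemma park_perm {u v : Word} (h : u.Perm v) : (park u).Perm (park v) := by
  rw [park_def, park_def, (h.map (fun a : ℕ+ => (a:ℕ))).sum_eq]
  exact parkAux_perm _ h

private lemma ev_eq_iff_perm (u v : Word) : ev u = ev v ↔ u.Perm v := by
  rw [List.perm_iff_count]
  exact ⟨fun h a => congrFun h a, fun h => funext h⟩

end AuxPark

theorem packGood_is_parkGood (r : Word → Word → Prop)
    (hcong : IsCongruence r) (hpack : IsPhiCongruence pack r)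
    (hres : CompatRestrict r) :
    IsPhiCongruence park r ∧ CompatRestrict r := by
  refine ⟨fun u v => ?_, hres⟩
  constructor
  · intro huv
    obtain ⟨hp, hev⟩ := (hpack u v).mp huv
    have hperm : u.Perm v := (ev_eq_iff_perm u v).mp hev
    refine ⟨(hpack (park u) (park v)).mpr ⟨?_, (ev_eq_iff_perm _ _).mpr (park_perm hperm)⟩, hev⟩
    rw [pack_park, pack_park]; exact hp
  · rintro ⟨hpk, hev⟩
    have h := (hpack (park u) (park v)).mp hpk
    refine (hpack u v).mpr ⟨?_, hev⟩
    rw [← pack_park u, ← pack_park v]; exact h.1
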